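/- Let I be an instance of SPA-ST and let J be the integer programming model of I. Then I admits a super-stable matching if and only if J admits a feasible solution (an assignment of values in {0,1} to all the variables satisfying all twelve constraint families). -/

import Mathlib

open scoped Classical

/-- An instance of the Student-Project Allocation problem with lecturer
preferences over students, with Ties (SPA-ST).  `sPref s p q` means student `s`
ranks project `p` at least as highly as project `q` (`p ⪰_s q`); `lPref k t t'`
means lecturer `k` ranks student `t` at least as highly as student `t'`. -/
structure SPAST (S P L : Type) [Fintype S] [Fintype P] [Fintype L]
    [DecidableEq S] [DecidableEq P] [DecidableEq L] where
  /-- the lecturer offering each project -/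
  lec : P → L
  /-- project capacities -/
  c : P → ℕ
  /-- lecturer capacities -/
  d : L → ℕ
  cpos : ∀ p : P, 0 < c p
  dpos : ∀ k : L, 0 < d k
  /-- the set of projects acceptable to each student -/
  acc : S → Finset P
  sPref : S → P → P → Prop
  lPref : L → S → S → Prop
  sRefl : ∀ s : S, ∀ p ∈ acc s, sPref s p p
  sTrans : ∀ s : S, ∀ p ∈ acc s, ∀ q ∈ acc s, ∀ r ∈ acc s,
    sPref s p q → sPref s q r → sPref s p r
  sTotal : ∀ s : S, ∀ p ∈ acc s, ∀ q ∈ acc s, sPref s p q ∨ sPref s q p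
  lRefl : ∀ k : L, ∀ t : S, (∃ p ∈ acc t, lec p = k) → lPref k t t
  lTrans : ∀ k : L, ∀ t1 t2 t3 : S,
    (∃ p ∈ acc t1, lec p = k) → (∃ p ∈ acc t2, lec p = k) → (∃ p ∈ acc t3, lec p = k) →
    lPref k t1 t2 → lPref k t2 t3 → lPref k t1 t3
  lTotal : ∀ k : L, ∀ t1 t2 : S,
    (∃ p ∈ acc t1, lec p = k) → (∃ p ∈ acc t2, lec p = k) →
    lPref k t1 t2 ∨ lPref k t2 t1
  capLB : ∀ p : P, c p ≤ d (lec p)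
  capUB : ∀ k : L, d k ≤ ∑ p ∈ Finset.univ.filter (fun p => lec p = k), c p

namespace SPAST

variable {S P L : Type} [Fintype S] [Fintype P] [Fintype L]
  [DecidableEq S] [DecidableEq P] [DecidableEq L]

/-- `M` is a matching: pairs are acceptable, each student is matched at most once,
and project and lecturer capacities are respected. -/
def IsMatching (I : SPAST S P L) (M : Finset (S × P)) : Prop :=
  (∀ x ∈ M, x.2 ∈ I.acc x.1) ∧
  (∀ s : S, ∀ p q : P, (s, p) ∈ M → (s, q) ∈ M → p = q) ∧
  (∀ p : P, (M.filter (fun x => x.2 = p)).card ≤ I.c p) ∧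
  (∀ k : L, (M.filter (fun x => I.lec x.2 = k)).card ≤ I.d k)

/-- The set `M(p)` of students assigned to project `p` in `M`. -/
def projAsg (M : Finset (S × P)) (p : P) : Finset S :=
  (M.filter (fun x => x.2 = p)).image Prod.fst

/-- The set `M(l_k)` of students assigned to lecturer `k` in `M`. -/
def lecAsg (I : SPAST S P L) (M : Finset (S × P)) (k : L) : Finset S :=
  (M.filter (fun x => I.lec x.2 = k)).image Prod.fst

/-- `t` is a least-preferred (worst) student of lecturer `k` in the set `T`. -/
def WorstIn (I : SPAST S P L) (k : L) (T : Finset S) (t : S) : Prop :=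
  t ∈ T ∧ ∀ t' ∈ T, I.lPref k t' t

/-- `(s, p)` is a super-blocking pair for `M`. -/
def SuperBlocking (I : SPAST S P L) (M : Finset (S × P)) (s : S) (p : P) : Prop :=
  p ∈ I.acc s ∧ (s, p) ∉ M ∧
  (∀ q : P, (s, q) ∈ M → ¬(I.sPref s q p ∧ ¬I.sPref s p q)) ∧
  (((projAsg M p).card < I.c p ∧ (lecAsg I M (I.lec p)).card < I.d (I.lec p)) ∨
   ((projAsg M p).card < I.c p ∧ (lecAsg I M (I.lec p)).card = I.d (I.lec p) ∧
     (s ∈ lecAsg I M (I.lec p) ∨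
      ∃ t : S, WorstIn I (I.lec p) (lecAsg I M (I.lec p)) t ∧ I.lPref (I.lec p) s t)) ∨
   ((projAsg M p).card = I.c p ∧
     ∃ t : S, WorstIn I (I.lec p) (projAsg M p) t ∧ I.lPref (I.lec p) s t))

/-- `(s, p)` is a weakly-blocking pair for `M`. -/
def WeakBlocking (I : SPAST S P L) (M : Finset (S × P)) (s : S) (p : P) : Prop :=
  p ∈ I.acc s ∧ (s, p) ∉ M ∧
  (∀ q : P, (s, q) ∈ M → I.sPref s p q ∧ ¬I.sPref s q p) ∧
  (((projAsg M p).card < I.c p ∧ (lecAsg I M (I.lec p)).card < I.d (I.lec p)) ∨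
   ((projAsg M p).card < I.c p ∧ (lecAsg I M (I.lec p)).card = I.d (I.lec p) ∧
     (s ∈ lecAsg I M (I.lec p) ∨
      ∃ t : S, WorstIn I (I.lec p) (lecAsg I M (I.lec p)) t ∧
        (I.lPref (I.lec p) s t ∧ ¬I.lPref (I.lec p) t s))) ∨
   ((projAsg M p).card = I.c p ∧
     ∃ t : S, WorstIn I (I.lec p) (projAsg M p) t ∧
       (I.lPref (I.lec p) s t ∧ ¬I.lPref (I.lec p) t s)))

/-- `M` is a super-stable matching in `I`. -/
def SuperStable (I : SPAST S P L) (M : Finset (S × P)) : Prop :=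
  I.IsMatching M ∧ ∀ (s : S) (p : P), ¬SuperBlocking I M s p

/-- `M` is a weakly stable matching in `I`. -/
def WeaklyStable (I : SPAST S P L) (M : Finset (S × P)) : Prop :=
  I.IsMatching M ∧ ∀ (s : S) (p : P), ¬WeakBlocking I M s p

/-- `I` is an SPA-S instance: all preference lists are strictly ordered
(the preorders are antisymmetric). -/
def StrictPrefs (I : SPAST S P L) : Prop :=
  (∀ s : S, ∀ p ∈ I.acc s, ∀ q ∈ I.acc s, I.sPref s p q → I.sPref s q p → p = q) ∧
  (∀ k : L, ∀ t t' : S, (∃ p ∈ I.acc t, I.lec p = k) → (∃ p ∈ I.acc t', I.lec p = k) →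
    I.lPref k t t' → I.lPref k t' t → t = t')

/-- `I'` is an SPA-S instance obtained from `I` by breaking the ties. -/
def TieBreaking (I I' : SPAST S P L) : Prop :=
  I'.lec = I.lec ∧ I'.c = I.c ∧ I'.d = I.d ∧ I'.acc = I.acc ∧
  StrictPrefs I' ∧
  (∀ (s : S) (p q : P), I.sPref s p q → ¬I.sPref s q p →
    I'.sPref s p q ∧ ¬I'.sPref s q p) ∧
  (∀ (k : L) (t t' : S), I.lPref k t t' → ¬I.lPref k t' t →
    I'.lPref k t t' ∧ ¬I'.lPref k t' t)

end SPAST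

namespace SPAST

variable {S P L : Type} [Fintype S] [Fintype P] [Fintype L]
  [DecidableEq S] [DecidableEq P] [DecidableEq L]

/-- The variables of the integer programming model `J` of an SPA-ST instance. -/
structure IPSol (S P L : Type) where
  x : S → P → ℤ
  alpha : P → ℤ
  beta : L → ℤ
  eta : L → ℤ
  delta : S → L → ℤ
  gamma : P → ℤ
  lam : S → P → ℤ

/-- a value in {0,1} -/
def Bin (v : ℤ) : Prop := v = 0 ∨ v = 1

/-- θ_{i,j} = 1 − x_{i,j} − Σ_{p' ∈ S_{i,j}} x_{i,p'}, where
`S_{i,j}` is the set of projects `s` strictly prefers to `p`. -/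
noncomputable def theta (I : SPAST S P L) (sol : IPSol S P L) (s : S) (p : P) : ℤ :=
  1 - sol.x s p -
    ∑ p' ∈ (I.acc s).filter (fun p' => I.sPref s p' p ∧ ¬I.sPref s p p'), sol.x s p'

/-- `sol` is a feasible solution of the IP model `J` of `I`: all variables take
values in {0,1} and the twelve constraint families hold. -/
def Feasible (I : SPAST S P L) (sol : IPSol S P L) : Prop :=
  -- binary variables
  (∀ (s : S) (p : P), Bin (sol.x s p)) ∧
  (∀ p : P, Bin (sol.alpha p)) ∧
  (∀ k : L, Bin (sol.beta k)) ∧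
  (∀ k : L, Bin (sol.eta k)) ∧
  (∀ (s : S) (k : L), Bin (sol.delta s k)) ∧
  (∀ p : P, Bin (sol.gamma p)) ∧
  (∀ (s : S), ∀ p ∈ I.acc s, Bin (sol.lam s p)) ∧
  -- x variables exist only for acceptable pairs
  (∀ (s : S) (p : P), p ∉ I.acc s → sol.x s p = 0) ∧
  -- (1)
  (∀ s : S, ∑ p ∈ I.acc s, sol.x s p ≤ 1) ∧
  -- (2)
  (∀ p : P, ∑ s : S, sol.x s p ≤ (I.c p : ℤ)) ∧
  -- (3)
  (∀ k : L, ∑ s : S, ∑ p ∈ Finset.univ.filter (fun p => I.lec p = k), sol.x s p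
    ≤ (I.d k : ℤ)) ∧
  -- (4)
  (∀ p : P, (I.c p : ℤ) * sol.alpha p ≥ (I.c p : ℤ) - ∑ s : S, sol.x s p) ∧
  -- (5)
  (∀ k : L, (I.d k : ℤ) * sol.beta k ≥
    (I.d k : ℤ) - ∑ s : S, ∑ p ∈ Finset.univ.filter (fun p => I.lec p = k), sol.x s p) ∧
  -- (6)
  (∀ (s : S), ∀ p ∈ I.acc s,
    theta I sol s p + sol.alpha p + sol.beta (I.lec p) ≤ 2) ∧
  -- (7)
  (∀ k : L, (I.d k : ℤ) * sol.eta k ≥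
    1 + (∑ s : S, ∑ p ∈ Finset.univ.filter (fun p => I.lec p = k), sol.x s p)
      - (I.d k : ℤ)) ∧
  -- (8)
  (∀ (s : S) (k : L), (I.d k : ℤ) * sol.delta s k ≥
    (∑ s' : S, ∑ p ∈ Finset.univ.filter (fun p => I.lec p = k), sol.x s' p) -
    ∑ s' ∈ Finset.univ.filter (fun s' : S =>
        (∃ q ∈ I.acc s', I.lec q = k) ∧ I.lPref k s' s ∧ ¬I.lPref k s s'),
      ∑ p ∈ Finset.univ.filter (fun p => I.lec p = k), sol.x s' p) ∧
  -- (9)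
  (∀ (s : S), ∀ p ∈ I.acc s,
    theta I sol s p + sol.alpha p + sol.eta (I.lec p) + sol.delta s (I.lec p) ≤ 3) ∧
  -- (10)
  (∀ p : P, (I.c p : ℤ) * sol.gamma p ≥ 1 + (∑ s : S, sol.x s p) - (I.c p : ℤ)) ∧
  -- (11)
  (∀ (s : S), ∀ p ∈ I.acc s, (I.c p : ℤ) * sol.lam s p ≥
    (∑ s' : S, sol.x s' p) -
    ∑ s' ∈ Finset.univ.filter (fun s' : S =>
        p ∈ I.acc s' ∧ I.lPref (I.lec p) s' s ∧ ¬I.lPref (I.lec p) s s'),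
      sol.x s' p) ∧
  -- (12)
  (∀ (s : S), ∀ p ∈ I.acc s,
    theta I sol s p + sol.gamma p + sol.lam s p ≤ 2)

/-- The matching `{(s_i, p_j) : x_{i,j} = 1}` derived from an IP solution. -/
def matchOf (sol : IPSol S P L) : Finset (S × P) :=
  Finset.univ.filter (fun y : S × P => sol.x y.1 y.2 = 1)

end SPAST


namespace SPAST

variable {S P L : Type} [Fintype S] [Fintype P] [Fintype L]
  [DecidableEq S] [DecidableEq P] [DecidableEq L]

lemma indSum (M : Finset (S × P)) (A : Finset S) (B : Finset P) :
    ∑ s ∈ A, ∑ p ∈ B, (if (s, p) ∈ M then (1 : ℤ) else 0)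
      = ((M.filter (fun y => y.1 ∈ A ∧ y.2 ∈ B)).card : ℤ) := by
  have h := Finset.sum_product A B (fun y : S × P => if y ∈ M then (1 : ℤ) else 0)
  rw [← h, Finset.sum_boole]
  congr 1
  apply Finset.card_bij (fun y _ => y)
  · intro y hy
    simp only [Finset.mem_filter, Finset.mem_product] at hy ⊢
    tauto
  · intro y _ y' _ h; exact h
  · intro y hy
    simp only [Finset.mem_filter, Finset.mem_product] at hy ⊢
    exact ⟨y, by tauto, rfl⟩

lemma indSumS (M : Finset (S × P)) (A : Finset S) (p : P) :
    ∑ s ∈ A, (if (s, p) ∈ M then (1 : ℤ) else 0)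
      = ((M.filter (fun y => y.1 ∈ A ∧ y.2 = p)).card : ℤ) := by
  have h := indSum M A {p}
  simp only [Finset.sum_singleton, Finset.mem_singleton] at h
  exact h

lemma indSumP (M : Finset (S × P)) (s : S) (B : Finset P) :
    ∑ p ∈ B, (if (s, p) ∈ M then (1 : ℤ) else 0)
      = ((M.filter (fun y => y.1 = s ∧ y.2 ∈ B)).card : ℤ) := by
  have h := indSum M {s} B
  simp only [Finset.sum_singleton, Finset.mem_singleton] at h
  exact h

lemma exists_worst (I : SPAST S P L) (k : L) (T : Finset S)
    (hne : T.Nonempty) (hT : ∀ t ∈ T, ∃ p ∈ I.acc t, I.lec p = k) :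
    ∃ t, I.WorstIn k T t := by
  classical
  induction T using Finset.induction_on with
  | empty => exact absurd hne (by simp)
  | @insert a T' ha ih =>
    by_cases hT' : T'.Nonempty
    · obtain ⟨t', ht'⟩ := ih hT' (fun t ht => hT t (Finset.mem_insert_of_mem ht))
      by_cases hc : I.lPref k a t'
      · refine ⟨t', Finset.mem_insert_of_mem ht'.1, ?_⟩
        intro x hx
        rcases Finset.mem_insert.1 hx with rfl | hx
        · exact hc
        · exact ht'.2 x hx
      · have hta := I.lTotal k a t' (hT a (Finset.mem_insert_self a T'))
          (hT t' (Finset.mem_insert_of_mem ht'.1))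
        have h1 : I.lPref k t' a := hta.resolve_left hc
        refine ⟨a, Finset.mem_insert_self a T', ?_⟩
        intro x hx
        rcases Finset.mem_insert.1 hx with rfl | hx
        · exact I.lRefl k x (hT x (Finset.mem_insert_self x T'))
        · exact I.lTrans k x t' a (hT x (Finset.mem_insert_of_mem hx))
            (hT t' (Finset.mem_insert_of_mem ht'.1)) (hT a (Finset.mem_insert_self a T'))
            (ht'.2 x hx) h1
    · have : T' = ∅ := Finset.not_nonempty_iff_eq_empty.1 hT'
      subst this
      refine ⟨a, Finset.mem_insert_self a ∅, ?_⟩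
      intro x hx
      rcases Finset.mem_insert.1 hx with rfl | hx
      · exact I.lRefl k x (hT x (Finset.mem_insert_self x ∅))
      · simp at hx

lemma projAsg_card (M : Finset (S × P)) (p : P) :
    (projAsg M p).card = (M.filter (fun y => y.2 = p)).card := by
  apply Finset.card_image_of_injOn
  intro y hy y' hy' h
  simp only [Finset.coe_filter, Set.mem_setOf_eq] at hy hy'
  exact Prod.ext h (hy.2.trans hy'.2.symm)

lemma lecAsg_card (I : SPAST S P L) (M : Finset (S × P))
    (hu : ∀ s : S, ∀ p q : P, (s, p) ∈ M → (s, q) ∈ M → p = q) (k : L) :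
    (lecAsg I M k).card = (M.filter (fun y => I.lec y.2 = k)).card := by
  apply Finset.card_image_of_injOn
  intro y hy y' hy' h
  simp only [Finset.coe_filter, Set.mem_setOf_eq] at hy hy'
  exact Prod.ext h (hu y.1 y.2 y'.2 hy.1 (h ▸ hy'.1))

lemma mem_projAsg {M : Finset (S × P)} {p : P} {t : S} :
    t ∈ projAsg M p ↔ (t, p) ∈ M := by
  simp only [projAsg, Finset.mem_image, Finset.mem_filter]
  constructor
  · rintro ⟨y, ⟨hy, h2⟩, rfl⟩
    rwa [← h2]
  · intro h; exact ⟨(t, p), ⟨h, rfl⟩, rfl⟩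

lemma mem_lecAsg {I : SPAST S P L} {M : Finset (S × P)} {k : L} {t : S} :
    t ∈ lecAsg I M k ↔ ∃ q : P, (t, q) ∈ M ∧ I.lec q = k := by
  simp only [lecAsg, Finset.mem_image, Finset.mem_filter]
  constructor
  · rintro ⟨y, ⟨hy, h2⟩, rfl⟩
    exact ⟨y.2, hy, h2⟩
  · rintro ⟨q, hq, hk⟩; exact ⟨(t, q), ⟨hq, hk⟩, rfl⟩

lemma filter_iff_congr {α : Type} (s : Finset α) (p q : α → Prop)
    [DecidablePred p] [DecidablePred q] (h : ∀ x ∈ s, p x ↔ q x) :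
    s.filter p = s.filter q := by
  ext y
  simp only [Finset.mem_filter]
  exact ⟨fun ⟨h1, h2⟩ => ⟨h1, (h y h1).1 h2⟩, fun ⟨h1, h2⟩ => ⟨h1, (h y h1).2 h2⟩⟩

lemma Bin_ite (c : Prop) [Decidable c] : Bin (if c then (1 : ℤ) else 0) := by
  unfold Bin
  split
  · exact Or.inr rfl
  · exact Or.inl rfl

lemma ite_bounds (c : Prop) [Decidable c] :
    (0 : ℤ) ≤ (if c then (1 : ℤ) else 0) ∧ (if c then (1 : ℤ) else 0) ≤ 1 := by
  split <;> norm_num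

lemma sumNp (sol : IPSol S P L) (M : Finset (S × P))
    (hx : ∀ s p, sol.x s p = if (s, p) ∈ M then (1 : ℤ) else 0) (p : P) :
    (∑ s : S, sol.x s p) = ((M.filter (fun y => y.2 = p)).card : ℤ) := by
  rw [show (∑ s : S, sol.x s p) = ∑ s : S, (if (s, p) ∈ M then (1 : ℤ) else 0) from
    Finset.sum_congr rfl fun s _ => hx s p]
  rw [indSumS M Finset.univ p]
  have he : M.filter (fun y => y.1 ∈ (Finset.univ : Finset S) ∧ y.2 = p)
      = M.filter (fun y => y.2 = p) :=
    filter_iff_congr M _ _ (fun y _ => by simp)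
  rw [he]

lemma sumNk (I : SPAST S P L) (sol : IPSol S P L) (M : Finset (S × P))
    (hx : ∀ s p, sol.x s p = if (s, p) ∈ M then (1 : ℤ) else 0) (k : L) :
    (∑ s : S, ∑ p ∈ Finset.univ.filter (fun p => I.lec p = k), sol.x s p)
      = ((M.filter (fun y => I.lec y.2 = k)).card : ℤ) := by
  rw [show (∑ s : S, ∑ p ∈ Finset.univ.filter (fun p => I.lec p = k), sol.x s p)
      = ∑ s : S, ∑ p ∈ Finset.univ.filter (fun p => I.lec p = k),
          (if (s, p) ∈ M then (1 : ℤ) else 0) from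
    Finset.sum_congr rfl fun s _ => Finset.sum_congr rfl fun p _ => hx s p]
  rw [indSum M Finset.univ (Finset.univ.filter (fun p => I.lec p = k))]
  have he : M.filter (fun y =>
        y.1 ∈ (Finset.univ : Finset S) ∧ y.2 ∈ Finset.univ.filter (fun p => I.lec p = k))
      = M.filter (fun y => I.lec y.2 = k) :=
    filter_iff_congr M _ _ (fun y _ => by simp)
  rw [he]

lemma sumD (I : SPAST S P L) (sol : IPSol S P L) (M : Finset (S × P))
    (hx : ∀ s p, sol.x s p = if (s, p) ∈ M then (1 : ℤ) else 0) (s : S) (k : L) :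
    (∑ s' ∈ Finset.univ.filter (fun s' : S =>
        (∃ q ∈ I.acc s', I.lec q = k) ∧ I.lPref k s' s ∧ ¬I.lPref k s s'),
      ∑ p ∈ Finset.univ.filter (fun p => I.lec p = k), sol.x s' p)
      = ((M.filter (fun y =>
          ((∃ q ∈ I.acc y.1, I.lec q = k) ∧ I.lPref k y.1 s ∧ ¬I.lPref k s y.1)
            ∧ I.lec y.2 = k)).card : ℤ) := by
  rw [show (∑ s' ∈ Finset.univ.filter (fun s' : S =>
        (∃ q ∈ I.acc s', I.lec q = k) ∧ I.lPref k s' s ∧ ¬I.lPref k s s'),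
      ∑ p ∈ Finset.univ.filter (fun p => I.lec p = k), sol.x s' p)
      = ∑ s' ∈ Finset.univ.filter (fun s' : S =>
        (∃ q ∈ I.acc s', I.lec q = k) ∧ I.lPref k s' s ∧ ¬I.lPref k s s'),
      ∑ p ∈ Finset.univ.filter (fun p => I.lec p = k),
          (if (s', p) ∈ M then (1 : ℤ) else 0) from
    Finset.sum_congr rfl fun s' _ => Finset.sum_congr rfl fun p _ => hx s' p]
  rw [indSum M _ _]
  have he : M.filter (fun y =>
        y.1 ∈ Finset.univ.filter (fun s' : S =>
          (∃ q ∈ I.acc s', I.lec q = k) ∧ I.lPref k s' s ∧ ¬I.lPref k s s')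
        ∧ y.2 ∈ Finset.univ.filter (fun p => I.lec p = k))
      = M.filter (fun y =>
          ((∃ q ∈ I.acc y.1, I.lec q = k) ∧ I.lPref k y.1 s ∧ ¬I.lPref k s y.1)
            ∧ I.lec y.2 = k) :=
    filter_iff_congr M _ _ (fun y _ => by simp)
  rw [he]

lemma sumT (I : SPAST S P L) (sol : IPSol S P L) (M : Finset (S × P))
    (hx : ∀ s p, sol.x s p = if (s, p) ∈ M then (1 : ℤ) else 0) (s : S) (p : P) :
    (∑ s' ∈ Finset.univ.filter (fun s' : S =>
        p ∈ I.acc s' ∧ I.lPref (I.lec p) s' s ∧ ¬I.lPref (I.lec p) s s'),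
      sol.x s' p)
      = ((M.filter (fun y =>
          (p ∈ I.acc y.1 ∧ I.lPref (I.lec p) y.1 s ∧ ¬I.lPref (I.lec p) s y.1)
            ∧ y.2 = p)).card : ℤ) := by
  rw [show (∑ s' ∈ Finset.univ.filter (fun s' : S =>
        p ∈ I.acc s' ∧ I.lPref (I.lec p) s' s ∧ ¬I.lPref (I.lec p) s s'),
      sol.x s' p)
      = ∑ s' ∈ Finset.univ.filter (fun s' : S =>
        p ∈ I.acc s' ∧ I.lPref (I.lec p) s' s ∧ ¬I.lPref (I.lec p) s s'),
          (if (s', p) ∈ M then (1 : ℤ) else 0) from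
    Finset.sum_congr rfl fun s' _ => hx s' p]
  rw [indSumS M _ p]
  have he : M.filter (fun y =>
        y.1 ∈ Finset.univ.filter (fun s' : S =>
          p ∈ I.acc s' ∧ I.lPref (I.lec p) s' s ∧ ¬I.lPref (I.lec p) s s')
        ∧ y.2 = p)
      = M.filter (fun y =>
          (p ∈ I.acc y.1 ∧ I.lPref (I.lec p) y.1 s ∧ ¬I.lPref (I.lec p) s y.1)
            ∧ y.2 = p) :=
    filter_iff_congr M _ _ (fun y _ => by simp)
  rw [he]

lemma sumAcc (I : SPAST S P L) (sol : IPSol S P L) (M : Finset (S × P))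
    (hx : ∀ s p, sol.x s p = if (s, p) ∈ M then (1 : ℤ) else 0) (s : S) :
    (∑ p ∈ I.acc s, sol.x s p)
      = ((M.filter (fun y => y.1 = s ∧ y.2 ∈ I.acc s)).card : ℤ) := by
  rw [show (∑ p ∈ I.acc s, sol.x s p)
      = ∑ p ∈ I.acc s, (if (s, p) ∈ M then (1 : ℤ) else 0) from
    Finset.sum_congr rfl fun p _ => hx s p]
  exact indSumP M s (I.acc s)

lemma theta_le_one (I : SPAST S P L) (sol : IPSol S P L) (M : Finset (S × P))
    (hx : ∀ s p, sol.x s p = if (s, p) ∈ M then (1 : ℤ) else 0) (s : S) (p : P) :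
    theta I sol s p ≤ 1 := by
  unfold theta
  have h0 : (0 : ℤ) ≤ sol.x s p := by rw [hx]; split <;> norm_num
  have h1 : (0 : ℤ) ≤ ∑ p' ∈ (I.acc s).filter
      (fun p' => I.sPref s p' p ∧ ¬I.sPref s p p'), sol.x s p' :=
    Finset.sum_nonneg fun p' _ => by rw [hx]; split <;> norm_num
  omega

lemma theta_eq_one (I : SPAST S P L) (sol : IPSol S P L) (M : Finset (S × P))
    (hx : ∀ s p, sol.x s p = if (s, p) ∈ M then (1 : ℤ) else 0)
    (hMacc : ∀ y ∈ M, y.2 ∈ I.acc y.1) (s : S) (p : P) :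
    theta I sol s p = 1 ↔
      ((s, p) ∉ M ∧ ∀ q : P, (s, q) ∈ M → ¬(I.sPref s q p ∧ ¬I.sPref s p q)) := by
  unfold theta
  have hterms : ∀ p' ∈ (I.acc s).filter (fun p' => I.sPref s p' p ∧ ¬I.sPref s p p'),
      (0 : ℤ) ≤ sol.x s p' := fun p' _ => by rw [hx]; split <;> norm_num
  constructor
  · intro h
    have h0 : (0 : ℤ) ≤ sol.x s p := by rw [hx]; split <;> norm_num
    have hsum : (0 : ℤ) ≤ ∑ p' ∈ (I.acc s).filter
        (fun p' => I.sPref s p' p ∧ ¬I.sPref s p p'), sol.x s p' :=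
      Finset.sum_nonneg hterms
    have hx0 : sol.x s p = 0 := by omega
    have hS0 : (∑ p' ∈ (I.acc s).filter
        (fun p' => I.sPref s p' p ∧ ¬I.sPref s p p'), sol.x s p') = 0 := by omega
    constructor
    · intro hm
      rw [hx, if_pos hm] at hx0
      norm_num at hx0
    · intro q hq hpref
      have hqacc : q ∈ I.acc s := hMacc (s, q) hq
      have hqF : q ∈ (I.acc s).filter (fun p' => I.sPref s p' p ∧ ¬I.sPref s p p') :=
        Finset.mem_filter.2 ⟨hqacc, hpref⟩
      have := (Finset.sum_eq_zero_iff_of_nonneg hterms).1 hS0 q hqF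
      rw [hx, if_pos hq] at this
      norm_num at this
  · rintro ⟨hnm, ha⟩
    have hx0 : sol.x s p = 0 := by rw [hx, if_neg hnm]
    have hS0 : (∑ p' ∈ (I.acc s).filter
        (fun p' => I.sPref s p' p ∧ ¬I.sPref s p p'), sol.x s p') = 0 :=
      Finset.sum_eq_zero fun q hq => by
        rw [hx, if_neg]
        intro hm
        exact ha q hm (Finset.mem_filter.1 hq).2
    rw [hx0, hS0]
    ring

/-- The feasible IP solution built from a super-stable matching. -/
noncomputable def solOf (I : SPAST S P L) (M : Finset (S × P)) : IPSol S P L where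
  x := fun s p => if (s, p) ∈ M then 1 else 0
  alpha := fun p => if (M.filter (fun y => y.2 = p)).card < I.c p then 1 else 0
  beta := fun k => if (M.filter (fun y => I.lec y.2 = k)).card < I.d k then 1 else 0
  eta := fun k => if (M.filter (fun y => I.lec y.2 = k)).card = I.d k then 1 else 0
  delta := fun s k =>
    if ∃ y ∈ M, I.lec y.2 = k ∧ ¬(I.lPref k y.1 s ∧ ¬I.lPref k s y.1) then 1 else 0
  gamma := fun p => if (M.filter (fun y => y.2 = p)).card = I.c p then 1 else 0
  lam := fun s p =>
    if ∃ y ∈ M, y.2 = p ∧ ¬(I.lPref (I.lec p) y.1 s ∧ ¬I.lPref (I.lec p) s y.1)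
    then 1 else 0

end SPAST

open SPAST in
theorem super_stable_exists_iff_feasible_exists {S P L : Type} [Fintype S] [Fintype P] [Fintype L]
    [DecidableEq S] [DecidableEq P] [DecidableEq L]
    (I : SPAST S P L) :
    (∃ M : Finset (S × P), SuperStable I M) ↔
      (∃ sol : IPSol S P L, Feasible I sol) := by
  classical
  constructor
  · rintro ⟨M, hSS⟩
    obtain ⟨⟨hMacc, huniq, hcapP, hcapK⟩, hStable⟩ := hSS
    refine ⟨solOf I M, ?_⟩
    have hx : ∀ s p, (solOf I M).x s p = if (s, p) ∈ M then (1 : ℤ) else 0 :=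
      fun _ _ => rfl
    have hα : ∀ p, (solOf I M).alpha p
        = if (M.filter (fun y => y.2 = p)).card < I.c p then (1 : ℤ) else 0 :=
      fun _ => rfl
    have hβ : ∀ k, (solOf I M).beta k
        = if (M.filter (fun y => I.lec y.2 = k)).card < I.d k then (1 : ℤ) else 0 :=
      fun _ => rfl
    have hη : ∀ k, (solOf I M).eta k
        = if (M.filter (fun y => I.lec y.2 = k)).card = I.d k then (1 : ℤ) else 0 :=
      fun _ => rfl
    have hδ : ∀ s k, (solOf I M).delta s k
        = if ∃ y ∈ M, I.lec y.2 = k ∧ ¬(I.lPref k y.1 s ∧ ¬I.lPref k s y.1)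
          then (1 : ℤ) else 0 :=
      fun _ _ => rfl
    have hγ : ∀ p, (solOf I M).gamma p
        = if (M.filter (fun y => y.2 = p)).card = I.c p then (1 : ℤ) else 0 :=
      fun _ => rfl
    have hlam : ∀ s p, (solOf I M).lam s p
        = if ∃ y ∈ M, y.2 = p ∧ ¬(I.lPref (I.lec p) y.1 s ∧ ¬I.lPref (I.lec p) s y.1)
          then (1 : ℤ) else 0 :=
      fun _ _ => rfl
    -- the ranking hypotheses needed for worst-student extraction
    have hrankL : ∀ k : L, ∀ t ∈ lecAsg I M k, ∃ q ∈ I.acc t, I.lec q = k := by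
      intro k t ht
      obtain ⟨q, hq, hk⟩ := mem_lecAsg.1 ht
      exact ⟨q, hMacc (t, q) hq, hk⟩
    have hrankP : ∀ p : P, ∀ t ∈ projAsg M p, ∃ q ∈ I.acc t, I.lec q = I.lec p := by
      intro p t ht
      have := mem_projAsg.1 ht
      exact ⟨p, hMacc (t, p) this, rfl⟩
    refine ⟨?_, ?_, ?_, ?_, ?_, ?_, ?_, ?_, ?_, ?_, ?_, ?_, ?_, ?_, ?_, ?_, ?_, ?_,
      ?_, ?_⟩
    · intro s p; rw [hx s p]; exact Bin_ite _
    · intro p; rw [hα p]; exact Bin_ite _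
    · intro k; rw [hβ k]; exact Bin_ite _
    · intro k; rw [hη k]; exact Bin_ite _
    · intro s k; rw [hδ s k]; exact Bin_ite _
    · intro p; rw [hγ p]; exact Bin_ite _
    · intro s p _; rw [hlam s p]; exact Bin_ite _
    · -- x is zero on unacceptable pairs
      intro s p hp
      rw [hx s p, if_neg]
      intro hm
      exact hp (hMacc (s, p) hm)
    · -- (1)
      intro s
      rw [sumAcc I (solOf I M) M hx s]
      have hone : (M.filter (fun y => y.1 = s ∧ y.2 ∈ I.acc s)).card ≤ 1 := by
        apply Finset.card_le_one.2
        intro y hy y' hy'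
        simp only [Finset.mem_filter] at hy hy'
        have hyM : (s, y.2) ∈ M := by
          have he : (s, y.2) = y := Prod.ext hy.2.1.symm rfl
          rw [he]; exact hy.1
        have hy'M : (s, y'.2) ∈ M := by
          have he : (s, y'.2) = y' := Prod.ext hy'.2.1.symm rfl
          rw [he]; exact hy'.1
        exact Prod.ext (hy.2.1.trans hy'.2.1.symm) (huniq s y.2 y'.2 hyM hy'M)
      exact_mod_cast hone
    · -- (2)
      intro p
      rw [sumNp (solOf I M) M hx p]
      exact_mod_cast hcapP p
    · -- (3)
      intro k
      rw [sumNk I (solOf I M) M hx k]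
      exact_mod_cast hcapK k
    · -- (4)
      intro p
      rw [hα p, sumNp (solOf I M) M hx p]
      by_cases h : (M.filter (fun y => y.2 = p)).card < I.c p
      · rw [if_pos h, mul_one]; omega
      · rw [if_neg h, mul_zero]; omega
    · -- (5)
      intro k
      rw [hβ k, sumNk I (solOf I M) M hx k]
      by_cases h : (M.filter (fun y => I.lec y.2 = k)).card < I.d k
      · rw [if_pos h, mul_one]; omega
      · rw [if_neg h, mul_zero]; omega
    · -- (6)
      intro s p hp
      rw [hα p, hβ (I.lec p)]
      have hle := theta_le_one I (solOf I M) M hx s p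
      have hb1 := ite_bounds ((M.filter (fun y => y.2 = p)).card < I.c p)
      have hb2 := ite_bounds
        ((M.filter (fun y => I.lec y.2 = I.lec p)).card < I.d (I.lec p))
      by_cases h1 : (M.filter (fun y => y.2 = p)).card < I.c p
      · by_cases h2 :
            (M.filter (fun y => I.lec y.2 = I.lec p)).card < I.d (I.lec p)
        · rw [if_pos h1, if_pos h2]
          have hne : theta I (solOf I M) s p ≠ 1 := by
            intro hθ
            obtain ⟨hnm, ha⟩ := (theta_eq_one I (solOf I M) M hx hMacc s p).1 hθ
            refine hStable s p ⟨hp, hnm, ha, Or.inl ⟨?_, ?_⟩⟩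
            · rw [projAsg_card]; exact h1
            · rw [lecAsg_card I M huniq]; exact h2
          omega
        · rw [if_neg h2]; omega
      · rw [if_neg h1]; omega
    · -- (7)
      intro k
      rw [hη k, sumNk I (solOf I M) M hx k]
      have hd := I.dpos k
      have hck := hcapK k
      by_cases h : (M.filter (fun y => I.lec y.2 = k)).card = I.d k
      · rw [if_pos h, mul_one]; omega
      · rw [if_neg h, mul_zero]; omega
    · -- (8)
      intro s k
      rw [hδ s k, sumNk I (solOf I M) M hx k, sumD I (solOf I M) M hx s k]
      by_cases h : ∃ y ∈ M, I.lec y.2 = k ∧ ¬(I.lPref k y.1 s ∧ ¬I.lPref k s y.1)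
      · rw [if_pos h, mul_one]
        have hck := hcapK k
        have hnn : 0 ≤ (M.filter (fun y =>
            ((∃ q ∈ I.acc y.1, I.lec q = k) ∧ I.lPref k y.1 s ∧ ¬I.lPref k s y.1)
              ∧ I.lec y.2 = k)).card := Nat.zero_le _
        omega
      · rw [if_neg h, mul_zero]
        push_neg at h
        have hsub : M.filter (fun y => I.lec y.2 = k) ⊆ M.filter (fun y =>
            ((∃ q ∈ I.acc y.1, I.lec q = k) ∧ I.lPref k y.1 s ∧ ¬I.lPref k s y.1)
              ∧ I.lec y.2 = k) := by
          intro y hy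
          simp only [Finset.mem_filter] at hy ⊢
          exact ⟨hy.1, ⟨⟨y.2, hMacc y hy.1, hy.2⟩, h y hy.1 hy.2⟩, hy.2⟩
        have := Finset.card_le_card hsub
        omega
    · -- (9)
      intro s p hp
      rw [hα p, hη (I.lec p), hδ s (I.lec p)]
      have hle := theta_le_one I (solOf I M) M hx s p
      have hb1 := ite_bounds ((M.filter (fun y => y.2 = p)).card < I.c p)
      have hb2 := ite_bounds
        ((M.filter (fun y => I.lec y.2 = I.lec p)).card = I.d (I.lec p))
      have hb3 := ite_bounds (∃ y ∈ M, I.lec y.2 = I.lec p ∧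
        ¬(I.lPref (I.lec p) y.1 s ∧ ¬I.lPref (I.lec p) s y.1))
      by_cases h1 : (M.filter (fun y => y.2 = p)).card < I.c p
      · by_cases h2 :
            (M.filter (fun y => I.lec y.2 = I.lec p)).card = I.d (I.lec p)
        · by_cases h3 : ∃ y ∈ M, I.lec y.2 = I.lec p ∧
              ¬(I.lPref (I.lec p) y.1 s ∧ ¬I.lPref (I.lec p) s y.1)
          · rw [if_pos h1, if_pos h2, if_pos h3]
            have hne : theta I (solOf I M) s p ≠ 1 := by
              intro hθ
              obtain ⟨hnm, ha⟩ := (theta_eq_one I (solOf I M) M hx hMacc s p).1 hθ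
              obtain ⟨y, hyM, hylec, hynot⟩ := h3
              have hy1mem : y.1 ∈ lecAsg I M (I.lec p) :=
                mem_lecAsg.2 ⟨y.2, hyM, hylec⟩
              obtain ⟨t, hW⟩ := exists_worst I (I.lec p) (lecAsg I M (I.lec p))
                ⟨y.1, hy1mem⟩ (hrankL (I.lec p))
              have hsy : I.lPref (I.lec p) s y.1 := by
                have htot := I.lTotal (I.lec p) s y.1 ⟨p, hp, rfl⟩
                  (hrankL (I.lec p) y.1 hy1mem)
                tauto
              have hst : I.lPref (I.lec p) s t :=
                I.lTrans (I.lec p) s y.1 t ⟨p, hp, rfl⟩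
                  (hrankL (I.lec p) y.1 hy1mem) (hrankL (I.lec p) t hW.1)
                  hsy (hW.2 y.1 hy1mem)
              refine hStable s p ⟨hp, hnm, ha, Or.inr (Or.inl ⟨?_, ?_, ?_⟩)⟩
              · rw [projAsg_card]; exact h1
              · rw [lecAsg_card I M huniq]; exact h2
              · exact Or.inr ⟨t, hW, hst⟩
            omega
          · rw [if_neg h3]; omega
        · rw [if_neg h2]; omega
      · rw [if_neg h1]; omega
    · -- (10)
      intro p
      rw [hγ p, sumNp (solOf I M) M hx p]
      have hc := I.cpos p
      have hcp := hcapP p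
      by_cases h : (M.filter (fun y => y.2 = p)).card = I.c p
      · rw [if_pos h, mul_one]; omega
      · rw [if_neg h, mul_zero]; omega
    · -- (11)
      intro s p hp
      rw [hlam s p, sumNp (solOf I M) M hx p, sumT I (solOf I M) M hx s p]
      by_cases h : ∃ y ∈ M, y.2 = p ∧
          ¬(I.lPref (I.lec p) y.1 s ∧ ¬I.lPref (I.lec p) s y.1)
      · rw [if_pos h, mul_one]
        have hcp := hcapP p
        omega
      · rw [if_neg h, mul_zero]
        push_neg at h
        have hsub : M.filter (fun y => y.2 = p) ⊆ M.filter (fun y =>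
            (p ∈ I.acc y.1 ∧ I.lPref (I.lec p) y.1 s ∧ ¬I.lPref (I.lec p) s y.1)
              ∧ y.2 = p) := by
          intro y hy
          simp only [Finset.mem_filter] at hy ⊢
          refine ⟨hy.1, ⟨?_, h y hy.1 hy.2⟩, hy.2⟩
          · have := hMacc y hy.1
            rwa [hy.2] at this
        have := Finset.card_le_card hsub
        omega
    · -- (12)
      intro s p hp
      rw [hγ p, hlam s p]
      have hle := theta_le_one I (solOf I M) M hx s p
      have hb1 := ite_bounds ((M.filter (fun y => y.2 = p)).card = I.c p)
      have hb2 := ite_bounds (∃ y ∈ M, y.2 = p ∧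
        ¬(I.lPref (I.lec p) y.1 s ∧ ¬I.lPref (I.lec p) s y.1))
      by_cases h1 : (M.filter (fun y => y.2 = p)).card = I.c p
      · by_cases h2 : ∃ y ∈ M, y.2 = p ∧
            ¬(I.lPref (I.lec p) y.1 s ∧ ¬I.lPref (I.lec p) s y.1)
        · rw [if_pos h1, if_pos h2]
          have hne : theta I (solOf I M) s p ≠ 1 := by
            intro hθ
            obtain ⟨hnm, ha⟩ := (theta_eq_one I (solOf I M) M hx hMacc s p).1 hθ
            obtain ⟨y, hyM, hyp, hynot⟩ := h2
            have hy1mem : y.1 ∈ projAsg M p := by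
              apply mem_projAsg.2
              have he : (y.1, p) = y := Prod.ext rfl hyp.symm
              rw [he]; exact hyM
            obtain ⟨t, hW⟩ := exists_worst I (I.lec p) (projAsg M p)
              ⟨y.1, hy1mem⟩ (hrankP p)
            have hsy : I.lPref (I.lec p) s y.1 := by
              have htot := I.lTotal (I.lec p) s y.1 ⟨p, hp, rfl⟩
                (hrankP p y.1 hy1mem)
              tauto
            have hst : I.lPref (I.lec p) s t :=
              I.lTrans (I.lec p) s y.1 t ⟨p, hp, rfl⟩
                (hrankP p y.1 hy1mem) (hrankP p t hW.1)
                hsy (hW.2 y.1 hy1mem)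
            refine hStable s p ⟨hp, hnm, ha, Or.inr (Or.inr ⟨?_, t, hW, hst⟩)⟩
            rw [projAsg_card]; exact h1
          omega
        · rw [if_neg h2]; omega
      · rw [if_neg h1]; omega
  · rintro ⟨sol, hF⟩
    obtain ⟨hbx, hbα, hbβ, hbη, hbδ, hbγ, hbl, hx0, h1, h2, h3, h4, h5, h6, h7,
      h8, h9, h10, h11, h12⟩ := hF
    set M := matchOf sol with hMdef
    have hx : ∀ s p, sol.x s p = if (s, p) ∈ M then (1 : ℤ) else 0 := by
      intro s p
      rcases hbx s p with h | h <;>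
        simp [hMdef, matchOf, Finset.mem_filter, h]
    have hMacc : ∀ y ∈ M, y.2 ∈ I.acc y.1 := by
      intro y hy
      by_contra hn
      have h0 := hx0 y.1 y.2 hn
      have h1' : sol.x y.1 y.2 = 1 := by
        simpa [hMdef, matchOf, Finset.mem_filter] using hy
      rw [h0] at h1'
      norm_num at h1'
    have hsAcc : ∀ s, (M.filter (fun y => y.1 = s ∧ y.2 ∈ I.acc s)).card ≤ 1 := by
      intro s
      have hh := h1 s
      rw [sumAcc I sol M hx s] at hh
      exact_mod_cast hh
    have huniq : ∀ s : S, ∀ p q : P, (s, p) ∈ M → (s, q) ∈ M → p = q := by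
      intro s p q hp hq
      by_contra hne
      have hpq : ((s, p) : S × P) ≠ (s, q) := by
        intro he
        exact hne (congrArg Prod.snd he)
      have hpair : ({(s, p), (s, q)} : Finset (S × P)) ⊆
          M.filter (fun y => y.1 = s ∧ y.2 ∈ I.acc s) := by
        intro y hy
        rcases Finset.mem_insert.1 hy with rfl | hy
        · exact Finset.mem_filter.2 ⟨hp, rfl, hMacc (s, p) hp⟩
        · rw [Finset.mem_singleton] at hy
          subst hy
          exact Finset.mem_filter.2 ⟨hq, rfl, hMacc (s, q) hq⟩
      have hc2 := Finset.card_le_card hpair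
      rw [Finset.card_pair hpq] at hc2
      have := hsAcc s
      omega
    have hcapP : ∀ p, (M.filter (fun y => y.2 = p)).card ≤ I.c p := by
      intro p
      have hh := h2 p
      rw [sumNp sol M hx p] at hh
      exact_mod_cast hh
    have hcapK : ∀ k, (M.filter (fun y => I.lec y.2 = k)).card ≤ I.d k := by
      intro k
      have hh := h3 k
      rw [sumNk I sol M hx k] at hh
      exact_mod_cast hh
    refine ⟨M, ⟨hMacc, huniq, hcapP, hcapK⟩, ?_⟩
    intro s p hblock
    obtain ⟨hp, hnm, ha, hcases⟩ := hblock
    have hθ : theta I sol s p = 1 :=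
      (theta_eq_one I sol M hx hMacc s p).2 ⟨hnm, ha⟩
    have hα1 : (projAsg M p).card < I.c p → sol.alpha p = 1 := by
      intro h
      rw [projAsg_card] at h
      rcases hbα p with h0 | h1'
      · exfalso
        have h4p := h4 p
        rw [sumNp sol M hx p, h0, mul_zero] at h4p
        omega
      · exact h1'
    have hβ1 : (lecAsg I M (I.lec p)).card < I.d (I.lec p) →
        sol.beta (I.lec p) = 1 := by
      intro h
      rw [lecAsg_card I M huniq] at h
      rcases hbβ (I.lec p) with h0 | h1'
      · exfalso
        have h5k := h5 (I.lec p)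
        rw [sumNk I sol M hx (I.lec p), h0, mul_zero] at h5k
        omega
      · exact h1'
    have hη1 : (lecAsg I M (I.lec p)).card = I.d (I.lec p) →
        sol.eta (I.lec p) = 1 := by
      intro h
      rw [lecAsg_card I M huniq] at h
      rcases hbη (I.lec p) with h0 | h1'
      · exfalso
        have h7k := h7 (I.lec p)
        rw [sumNk I sol M hx (I.lec p), h0, mul_zero] at h7k
        omega
      · exact h1'
    have hγ1 : (projAsg M p).card = I.c p → sol.gamma p = 1 := by
      intro h
      rw [projAsg_card] at h
      rcases hbγ p with h0 | h1'
      · exfalso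
        have h10p := h10 p
        rw [sumNp sol M hx p, h0, mul_zero] at h10p
        omega
      · exact h1'
    have hδ1 : ∀ t : S, t ∈ lecAsg I M (I.lec p) → I.lPref (I.lec p) s t →
        sol.delta s (I.lec p) = 1 := by
      intro t ht hst
      rcases hbδ s (I.lec p) with h0 | h1'
      swap
      · exact h1'
      exfalso
      have h8k := h8 s (I.lec p)
      rw [h0, mul_zero, sumNk I sol M hx (I.lec p), sumD I sol M hx s (I.lec p)]
        at h8k
      obtain ⟨q, hq, hkq⟩ := mem_lecAsg.1 ht
      have hyA : ((t, q) : S × P) ∈ M.filter (fun y => I.lec y.2 = I.lec p) :=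
        Finset.mem_filter.2 ⟨hq, hkq⟩
      have hyD : ((t, q) : S × P) ∉ M.filter (fun y =>
          ((∃ q' ∈ I.acc y.1, I.lec q' = I.lec p) ∧ I.lPref (I.lec p) y.1 s ∧
            ¬I.lPref (I.lec p) s y.1) ∧ I.lec y.2 = I.lec p) := by
        intro hmem
        exact (Finset.mem_filter.1 hmem).2.1.2.2 hst
      have hsub : M.filter (fun y =>
          ((∃ q' ∈ I.acc y.1, I.lec q' = I.lec p) ∧ I.lPref (I.lec p) y.1 s ∧
            ¬I.lPref (I.lec p) s y.1) ∧ I.lec y.2 = I.lec p) ⊆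
          (M.filter (fun y => I.lec y.2 = I.lec p)).erase (t, q) := by
        intro y hy
        rw [Finset.mem_erase]
        constructor
        · intro he
          exact hyD (he ▸ hy)
        · have := Finset.mem_filter.1 hy
          exact Finset.mem_filter.2 ⟨this.1, this.2.2⟩
      have hcard := Finset.card_le_card hsub
      rw [Finset.card_erase_of_mem hyA] at hcard
      have hpos : 0 < (M.filter (fun y => I.lec y.2 = I.lec p)).card :=
        Finset.card_pos.2 ⟨_, hyA⟩
      omega
    have hlam1 : ∀ t : S, t ∈ projAsg M p → I.lPref (I.lec p) s t →
        sol.lam s p = 1 := by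
      intro t ht hst
      rcases hbl s p hp with h0 | h1'
      swap
      · exact h1'
      exfalso
      have h11k := h11 s p hp
      rw [h0, mul_zero, sumNp sol M hx p, sumT I sol M hx s p] at h11k
      have htp : ((t, p) : S × P) ∈ M := mem_projAsg.1 ht
      have hyA : ((t, p) : S × P) ∈ M.filter (fun y => y.2 = p) :=
        Finset.mem_filter.2 ⟨htp, rfl⟩
      have hyD : ((t, p) : S × P) ∉ M.filter (fun y =>
          (p ∈ I.acc y.1 ∧ I.lPref (I.lec p) y.1 s ∧ ¬I.lPref (I.lec p) s y.1)
            ∧ y.2 = p) := by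
        intro hmem
        exact (Finset.mem_filter.1 hmem).2.1.2.2 hst
      have hsub : M.filter (fun y =>
          (p ∈ I.acc y.1 ∧ I.lPref (I.lec p) y.1 s ∧ ¬I.lPref (I.lec p) s y.1)
            ∧ y.2 = p) ⊆ (M.filter (fun y => y.2 = p)).erase (t, p) := by
        intro y hy
        rw [Finset.mem_erase]
        constructor
        · intro he
          exact hyD (he ▸ hy)
        · have := Finset.mem_filter.1 hy
          exact Finset.mem_filter.2 ⟨this.1, this.2.2⟩
      have hcard := Finset.card_le_card hsub
      rw [Finset.card_erase_of_mem hyA] at hcard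
      have hpos : 0 < (M.filter (fun y => y.2 = p)).card :=
        Finset.card_pos.2 ⟨_, hyA⟩
      omega
    rcases hcases with ⟨hpc, hkc⟩ | ⟨hpc, hkc, hor⟩ | ⟨hpc, t, hW, hst⟩
    · have hA := hα1 hpc
      have hB := hβ1 hkc
      have h6' := h6 s p hp
      rw [hθ, hA, hB] at h6'
      norm_num at h6'
    · have hA := hα1 hpc
      have hH := hη1 hkc
      have hD : sol.delta s (I.lec p) = 1 := by
        rcases hor with hs | ⟨t, hW, hst⟩
        · exact hδ1 s hs (I.lRefl (I.lec p) s ⟨p, hp, rfl⟩)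
        · exact hδ1 t hW.1 hst
      have h9' := h9 s p hp
      rw [hθ, hA, hH, hD] at h9'
      norm_num at h9'
    · have hG := hγ1 hpc
      have hL := hlam1 t hW.1 hst
      have h12' := h12 s p hp
      rw [hθ, hG, hL] at h12'
      norm_num at h12'
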